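/- Suppose u₀ ∈ C(Ω) satisfies F(u₀) < +∞ and F(u₀) ≤ F(u) for all u ∈ C(Ω). Then u₀ coincides on Ω with its convex envelope relative to Ω₊ ∪ ∂Ω: for every x ∈ Ω, u₀(x) = sup{ℓ(x) : ℓ : ℝⁿ → ℝ affine with ℓ ≤ u₀ on Ω₊ ∪ ∂Ω}. -/

import Mathlib

open MeasureTheory RealInnerProductSpace
open scoped ENNReal Classical

noncomputable section

abbrev Euc (n : ℕ) := EuclideanSpace ℝ (Fin n)

/-- A set `S ⊆ ℝⁿ` has Lipschitz boundary: near each boundary point, after choosing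
a unit direction `e`, `S` is the subgraph of a Lipschitz function on `e^⊥`. -/
def HasLipschitzBoundary {n : ℕ} (S : Set (Euc n)) : Prop :=
  ∀ z ∈ frontier S, ∃ (e : Euc n) (f : Euc n → ℝ) (K : NNReal) (ρ : ℝ),
    ‖e‖ = 1 ∧ 0 < ρ ∧ LipschitzWith K f ∧
    ∀ x ∈ Metric.ball z ρ, (x ∈ S ↔ ⟪e, x⟫ < f (x - ⟪e, x⟫ • e))

-- helpers
lemma ereal_coe_ennreal_eq (p : ℝ≥0∞) (hp : p ≠ ⊤) :
    ((p : EReal)) = ((p.toReal : ℝ) : EReal) := by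
  rw [← EReal.toReal_coe_ennreal]
  exact (EReal.coe_toReal (by simpa using hp) (by simp)).symm

lemma ereal_helper (r : ℝ) (p q : ℝ≥0∞) (hp : p ≠ ⊤) (hq : q ≠ ⊤) :
    ((r : EReal) + (p : EReal) - (q : EReal)) = ((r + p.toReal - q.toReal : ℝ) : EReal) := by
  rw [ereal_coe_ennreal_eq p hp, ereal_coe_ennreal_eq q hq]
  norm_cast

lemma real_eq_of_ofReal {a b : ℝ} (h1 : ENNReal.ofReal a = ENNReal.ofReal b)
    (h2 : ENNReal.ofReal (-a) = ENNReal.ofReal (-b)) : a = b := by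
  have k : ∀ r : ℝ, r = max r 0 - max (-r) 0 := by
    intro r
    rcases le_total r 0 with h | h
    · rw [max_eq_right h, max_eq_left (by linarith)]; ring
    · rw [max_eq_left h, max_eq_right (by linarith)]; ring
  have t1 := congrArg ENNReal.toReal h1
  have t2 := congrArg ENNReal.toReal h2
  rw [ENNReal.toReal_ofReal', ENNReal.toReal_ofReal'] at t1 t2
  rw [k a, k b, t1, t2]

lemma ae_eq_of_lintegral_eq {α : Type*} [MeasurableSpace α] {μ : Measure α}
    {f g : α → ℝ≥0∞} (hf : AEMeasurable f μ) (hg : AEMeasurable g μ)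
    (hle : f ≤ᵐ[μ] g) (hfin : ∫⁻ a, f a ∂μ ≠ ⊤)
    (heq : ∫⁻ a, f a ∂μ = ∫⁻ a, g a ∂μ) : f =ᵐ[μ] g := by
  have hsub : ∫⁻ a, g a - f a ∂μ = ∫⁻ a, g a ∂μ - ∫⁻ a, f a ∂μ :=
    lintegral_sub' hf hfin hle
  rw [← heq, tsub_self] at hsub
  have h0 : (fun a => g a - f a) =ᵐ[μ] 0 :=
    (lintegral_eq_zero_iff' (hg.sub hf)).1 hsub
  filter_upwards [h0, hle] with a h1 h2
  exact le_antisymm h2 (tsub_eq_zero_iff_le.1 h1)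

lemma affine_convexOn {n : ℕ} {s : Set (Euc n)} (hs : Convex ℝ s) (p : Euc n) (c : ℝ) :
    ConvexOn ℝ s (fun z => ⟪p, z⟫ + c) := by
  refine ⟨hs, fun y hy z hz a b ha hb hab => le_of_eq ?_⟩
  simp only [inner_add_right, real_inner_smul_right, smul_eq_mul]
  linear_combination c * hab.symm

lemma exists_supporting {n : ℕ} {s : Set (Euc n)} (hs : IsOpen s) (hconv : Convex ℝ s)
    {u : Euc n → ℝ} (hu : ConvexOn ℝ (closure s) u) {x : Euc n} (hx : x ∈ s) :
    ∃ (p : Euc n) (c : ℝ), (∀ z ∈ closure s, ⟪p, z⟫ + c ≤ u z) ∧ ⟪p, x⟫ + c = u x := by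
  have husub : ConvexOn ℝ s u := hu.subset subset_closure hconv
  have hucont : ContinuousOn u s := husub.continuousOn hs
  set S : Set (Euc n × ℝ) := {q | q.1 ∈ s ∧ u q.1 < q.2} with hS
  have hSconv : Convex ℝ S := husub.convex_strict_epigraph
  have hSopen : IsOpen S := by
    have h1 : ContinuousOn (fun q : Euc n × ℝ => q.2 - u q.1) (s ×ˢ (Set.univ : Set ℝ)) :=
      continuous_snd.continuousOn.sub
        (hucont.comp continuous_fst.continuousOn (fun q hq => hq.1))
    have h2 := h1.isOpen_inter_preimage (hs.prod isOpen_univ) isOpen_Ioi (t := Set.Ioi (0:ℝ))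
    convert h2 using 1
    ext q
    simp only [hS, Set.mem_setOf_eq, Set.mem_inter_iff, Set.mem_prod, Set.mem_univ, and_true,
      Set.mem_preimage, Set.mem_Ioi, sub_pos]
  have hxS : (x, u x) ∉ S := fun h => lt_irrefl _ h.2
  obtain ⟨f, hf⟩ := geometric_hahn_banach_open_point hSconv hSopen hxS
  set a : ℝ := f (0, 1) with ha_def
  have hsplit : ∀ (y : Euc n) (t : ℝ), f (y, t) = f (y, 0) + t * a := by
    intro y t
    have h : (y, t) = (y, (0:ℝ)) + t • ((0 : Euc n), (1:ℝ)) := by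
      simp [Prod.ext_iff]
    rw [h, map_add, f.map_smul]
    simp [smul_eq_mul]
    exact Or.inl ha_def.symm
  have ha : a < 0 := by
    have h1 := hf (x, u x + 1) ⟨hx, lt_add_one (u x)⟩
    rw [hsplit x (u x + 1), hsplit x (u x)] at h1
    nlinarith
  have hna : (0:ℝ) < -a := by linarith
  have hkey : ∀ y ∈ s, f (y, 0) + u y * a ≤ f (x, 0) + u x * a := by
    intro y hy
    by_contra hcon
    push_neg at hcon
    set δ := f (y, 0) + u y * a - (f (x, 0) + u x * a) with hδ
    have hδpos : 0 < δ := by linarith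
    have hε : (0:ℝ) < δ / (-a) := div_pos hδpos hna
    have hmem : (y, u y + δ / (-a)) ∈ S := ⟨hy, show u y < u y + δ / (-a) by linarith⟩
    have h3 := hf _ hmem
    rw [hsplit y _, hsplit x _] at h3
    have h4 : (u y + δ / (-a)) * a = u y * a - δ := by
      rw [div_neg, add_mul, neg_mul, div_mul_cancel₀ _ ha.ne]
      ring
    rw [h4] at h3
    linarith
  have hcl : ∀ z ∈ closure s, f (z, 0) - f (x, 0) ≤ (-a) * (u z - u x) := by
    intro z hz
    have hm : (1/2 : ℝ) • x + (1/2 : ℝ) • z ∈ interior s :=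
      hconv.combo_interior_closure_mem_interior (by rwa [hs.interior_eq]) hz
        (by norm_num) (by norm_num) (by norm_num)
    rw [hs.interior_eq] at hm
    have h2 := hkey _ hm
    have hlin : f ((1/2 : ℝ) • x + (1/2 : ℝ) • z, 0)
        = (1/2) * f (x, 0) + (1/2) * f (z, 0) := by
      have h : ((1/2 : ℝ) • x + (1/2 : ℝ) • z, (0:ℝ))
          = (1/2 : ℝ) • ((x, (0:ℝ))) + (1/2 : ℝ) • ((z, (0:ℝ))) := by
        simp [Prod.ext_iff]
      rw [h, map_add, f.map_smul, f.map_smul]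
      simp [smul_eq_mul]
    rw [hlin] at h2
    have hconvu : u ((1/2 : ℝ) • x + (1/2 : ℝ) • z) ≤ (1/2) * u x + (1/2) * u z := by
      have := hu.2 (subset_closure hx) hz (by norm_num : (0:ℝ) ≤ 1/2)
        (by norm_num : (0:ℝ) ≤ 1/2) (by norm_num)
      simpa [smul_eq_mul] using this
    have h5 : ((1/2) * u x + (1/2) * u z) * a ≤ u ((1/2 : ℝ) • x + (1/2 : ℝ) • z) * a :=
      mul_le_mul_of_nonpos_right hconvu ha.le
    nlinarith
  set G : Euc n →L[ℝ] ℝ := f.comp (ContinuousLinearMap.inl ℝ (Euc n) ℝ) with hG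
  set q : Euc n := (InnerProductSpace.toDual ℝ (Euc n)).symm G with hq_def
  have hq : ∀ z, ⟪q, z⟫ = f (z, 0) := by
    intro z
    have h1 : InnerProductSpace.toDual ℝ (Euc n) q z = ⟪q, z⟫ :=
      InnerProductSpace.toDual_apply_apply
    rw [hq_def] at h1
    rw [(InnerProductSpace.toDual ℝ (Euc n)).apply_symm_apply G] at h1
    rw [← h1]
    rfl
  refine ⟨(-a⁻¹) • q, u x + a⁻¹ * f (x, 0), ?_, ?_⟩
  · intro z hz
    rw [real_inner_smul_left, hq]
    have h1 : (f (z, 0) - f (x, 0)) / (-a) ≤ u z - u x :=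
      (div_le_iff₀ hna).2 (by linarith [hcl z hz])
    have h2 : (f (z, 0) - f (x, 0)) / (-a) = -a⁻¹ * f (z, 0) + a⁻¹ * f (x, 0) := by
      field_simp [ha.ne]
      ring
    linarith [h2 ▸ h1]
  · rw [real_inner_smul_left, hq]
    ring

/-- In the setting of the minimization problem for
`F(u) = ∫_{∂Ω} A(u) dσ + ∫_Ω B(u) μ dx`, a minimizer `u₀ ∈ C(Ω)` coincides on `Ω` with
its convex envelope relative to `Ω₊ ∪ ∂Ω`: for every `x ∈ Ω`, `u₀(x)` is the supremum of
`ℓ(x)` over all affine `ℓ` with `ℓ ≤ u₀` on `Ω₊ ∪ ∂Ω`. -/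
theorem stmt5 (n : ℕ) (Ω : Set (Euc n))
    (hΩopen : IsOpen Ω) (hΩbdd : Bornology.IsBounded Ω) (hΩconv : Convex ℝ Ω)
    (σm : Measure (Euc n)) [IsFiniteMeasure σm] (hσsupp : σm (frontier Ω)ᶜ = 0)
    (μf : Euc n → ℝ) (hμcont : ContinuousOn μf (closure Ω))
    (hne : {x ∈ Ω | μf x < 0}.Nonempty)
    (hLip : ∀ x ∈ {x ∈ Ω | μf x < 0},
      HasLipschitzBoundary (connectedComponentIn {x ∈ Ω | μf x < 0} x))
    (hzero : volume {x ∈ Ω | μf x = 0} = 0)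
    (A B : ℝ → ℝ) (hAcont : Continuous A) (hAmono : Monotone A)
    (hBcont : Continuous B) (hBmono : StrictMono B)
    (CΩ : Set (Euc n → ℝ))
    (hCΩ : CΩ = {u | ConvexOn ℝ (closure Ω) u ∧
      IntegrableOn (fun x => |A (u x)|) (frontier Ω) σm})
    (hnegpart : ∀ u ∈ CΩ, IntegrableOn (fun x => max (-(B (u x) * μf x)) 0) Ω volume)
    (F : (Euc n → ℝ) → EReal)
    (hF : ∀ u, F u = ((∫ x in frontier Ω, A (u x) ∂σm : ℝ) : EReal)
        + ((∫⁻ x in Ω, ENNReal.ofReal (B (u x) * μf x)) : ℝ≥0∞)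
        - ((∫⁻ x in Ω, ENNReal.ofReal (-(B (u x) * μf x))) : ℝ≥0∞))
    (u₀ : Euc n → ℝ) (hu₀ : u₀ ∈ CΩ) (hfin : F u₀ < ⊤)
    (hmin : ∀ u ∈ CΩ, F u₀ ≤ F u) :
    ∀ x ∈ Ω,
      IsLUB {t : ℝ | ∃ (p : Euc n) (c : ℝ),
          (∀ z ∈ {x ∈ Ω | 0 ≤ μf x} ∪ frontier Ω, ⟪p, z⟫ + c ≤ u₀ z) ∧
          t = ⟪p, x⟫ + c}
        (u₀ x) := by
  have hu₀' := hu₀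
  rw [hCΩ] at hu₀'
  obtain ⟨hu₀conv, hu₀int⟩ := hu₀'
  have hΩm : MeasurableSet Ω := hΩopen.measurableSet
  have hu₀cont : ContinuousOn u₀ Ω :=
    (hu₀conv.subset subset_closure hΩconv).continuousOn hΩopen
  have hμcontΩ : ContinuousOn μf Ω := hμcont.mono subset_closure
  have hNfin : ∀ u ∈ CΩ, (∫⁻ x in Ω, ENNReal.ofReal (-(B (u x) * μf x))) ≠ ⊤ := by
    intro u hu
    have h2 := (hnegpart u hu).2
    have h3 : (∫⁻ x in Ω, ENNReal.ofReal (-(B (u x) * μf x)))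
        ≤ ∫⁻ x in Ω, (‖max (-(B (u x) * μf x)) 0‖₊ : ℝ≥0∞) := by
      apply lintegral_mono
      intro z
      exact le_trans (ENNReal.ofReal_le_ofReal (le_max_left _ _))
        (le_of_eq (Real.enorm_eq_ofReal (le_max_right _ _)).symm)
    exact (lt_of_le_of_lt h3 h2).ne
  -- Upper bound: every admissible affine function lies below u₀ on Ω
  have hub : ∀ (p : Euc n) (c : ℝ),
      (∀ z ∈ {x ∈ Ω | 0 ≤ μf x} ∪ frontier Ω, ⟪p, z⟫ + c ≤ u₀ z) →
      ∀ y ∈ Ω, ⟪p, y⟫ + c ≤ u₀ y := by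
    intro p c hpc
    set ℓ : Euc n → ℝ := fun z => ⟪p, z⟫ + c with hℓdef
    set v : Euc n → ℝ := fun x => max (u₀ x) (ℓ x) with hvdef
    have hℓcont : Continuous ℓ := (continuous_const.inner continuous_id).add continuous_const
    have hvconv : ConvexOn ℝ (closure Ω) v :=
      hu₀conv.sup (affine_convexOn hΩconv.closure p c)
    have hvcont : ContinuousOn v Ω := fun z hz => (hu₀cont z hz).max ((hℓcont.continuousOn) z hz)
    have hfr : ∀ z ∈ frontier Ω, v z = u₀ z := fun z hz => max_eq_left (hpc z (Or.inr hz))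
    have hvmem : v ∈ CΩ := by
      rw [hCΩ]
      refine ⟨hvconv, hu₀int.congr_fun (fun z hz => ?_) isClosed_frontier.measurableSet⟩
      show |A (u₀ z)| = |A (v z)|
      rw [hfr z hz]
    have hbd : ∫ x in frontier Ω, A (v x) ∂σm = ∫ x in frontier Ω, A (u₀ x) ∂σm :=
      setIntegral_congr_fun isClosed_frontier.measurableSet (fun z hz => by rw [hfr z hz])
    have hpt : ∀ z ∈ Ω, B (v z) * μf z ≤ B (u₀ z) * μf z := by
      intro z hz
      rcases le_or_gt 0 (μf z) with h | h
      · have h1 : ℓ z ≤ u₀ z := hpc z (Or.inl ⟨hz, h⟩)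
        rw [show v z = u₀ z from max_eq_left h1]
      · exact mul_le_mul_of_nonpos_right (hBmono.monotone (le_max_left _ _)) h.le
    set P0 := ∫⁻ x in Ω, ENNReal.ofReal (B (u₀ x) * μf x) with hP0
    set N0 := ∫⁻ x in Ω, ENNReal.ofReal (-(B (u₀ x) * μf x)) with hN0
    set Pv := ∫⁻ x in Ω, ENNReal.ofReal (B (v x) * μf x) with hPv
    set Nv := ∫⁻ x in Ω, ENNReal.ofReal (-(B (v x) * μf x)) with hNv
    have hN0fin : N0 ≠ ⊤ := hNfin u₀ hu₀
    have hNvfin : Nv ≠ ⊤ := hNfin v hvmem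
    have hPle : Pv ≤ P0 := by
      apply lintegral_mono_ae
      rw [ae_restrict_iff' hΩm]
      exact ae_of_all _ fun z hz => ENNReal.ofReal_le_ofReal (hpt z hz)
    have hNle : N0 ≤ Nv := by
      apply lintegral_mono_ae
      rw [ae_restrict_iff' hΩm]
      exact ae_of_all _ fun z hz => ENNReal.ofReal_le_ofReal (by linarith [hpt z hz])
    have hP0fin : P0 ≠ ⊤ := by
      intro htop
      rw [hF u₀, ← hP0, ← hN0, htop, EReal.coe_ennreal_top,
        EReal.add_top_of_ne_bot (EReal.coe_ne_bot _),
        ereal_coe_ennreal_eq N0 hN0fin, EReal.top_sub_coe] at hfin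
      exact lt_irrefl _ hfin
    have hPvfin : Pv ≠ ⊤ := ne_top_of_le_ne_top hP0fin hPle
    have hmin' := hmin v hvmem
    rw [hF u₀, hF v, hbd, ← hP0, ← hN0, ← hPv, ← hNv,
      ereal_helper _ P0 N0 hP0fin hN0fin, ereal_helper _ Pv Nv hPvfin hNvfin] at hmin'
    replace hmin' := EReal.coe_le_coe_iff.1 hmin'
    have e1 : Pv.toReal ≤ P0.toReal := ENNReal.toReal_mono hP0fin hPle
    have e2 : N0.toReal ≤ Nv.toReal := ENNReal.toReal_mono hNvfin hNle
    have ePv : Pv = P0 := (ENNReal.toReal_eq_toReal_iff' hPvfin hP0fin).1 (by linarith)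
    have eNv : Nv = N0 := (ENNReal.toReal_eq_toReal_iff' hNvfin hN0fin).1 (by linarith)
    have hμaem : AEMeasurable μf (volume.restrict Ω) := hμcontΩ.aemeasurable hΩm
    have hu₀aem : AEMeasurable u₀ (volume.restrict Ω) := hu₀cont.aemeasurable hΩm
    have hvaem : AEMeasurable v (volume.restrict Ω) := hvcont.aemeasurable hΩm
    have mB0 : AEMeasurable (fun x => B (u₀ x) * μf x) (volume.restrict Ω) :=
      (hBcont.measurable.comp_aemeasurable hu₀aem).mul hμaem
    have mBv : AEMeasurable (fun x => B (v x) * μf x) (volume.restrict Ω) :=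
      (hBcont.measurable.comp_aemeasurable hvaem).mul hμaem
    have m0 : AEMeasurable (fun x => ENNReal.ofReal (B (u₀ x) * μf x)) (volume.restrict Ω) :=
      ENNReal.measurable_ofReal.comp_aemeasurable mB0
    have mv : AEMeasurable (fun x => ENNReal.ofReal (B (v x) * μf x)) (volume.restrict Ω) :=
      ENNReal.measurable_ofReal.comp_aemeasurable mBv
    have m0n : AEMeasurable (fun x => ENNReal.ofReal (-(B (u₀ x) * μf x))) (volume.restrict Ω) :=
      ENNReal.measurable_ofReal.comp_aemeasurable mB0.neg
    have mvn : AEMeasurable (fun x => ENNReal.ofReal (-(B (v x) * μf x))) (volume.restrict Ω) :=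
      ENNReal.measurable_ofReal.comp_aemeasurable mBv.neg
    have hle1 : (fun x => ENNReal.ofReal (B (v x) * μf x))
        ≤ᵐ[volume.restrict Ω] fun x => ENNReal.ofReal (B (u₀ x) * μf x) := by
      rw [Filter.EventuallyLE, ae_restrict_iff' hΩm]
      exact ae_of_all _ fun z hz => ENNReal.ofReal_le_ofReal (hpt z hz)
    have hle2 : (fun x => ENNReal.ofReal (-(B (u₀ x) * μf x)))
        ≤ᵐ[volume.restrict Ω] fun x => ENNReal.ofReal (-(B (v x) * μf x)) := by
      rw [Filter.EventuallyLE, ae_restrict_iff' hΩm]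
      exact ae_of_all _ fun z hz => ENNReal.ofReal_le_ofReal (by linarith [hpt z hz])
    have key1 : (fun x => ENNReal.ofReal (B (v x) * μf x))
        =ᵐ[volume.restrict Ω] fun x => ENNReal.ofReal (B (u₀ x) * μf x) :=
      ae_eq_of_lintegral_eq mv m0 hle1 hPvfin (by rw [← hPv, ← hP0, ePv])
    have key2 : (fun x => ENNReal.ofReal (-(B (u₀ x) * μf x)))
        =ᵐ[volume.restrict Ω] fun x => ENNReal.ofReal (-(B (v x) * μf x)) :=
      ae_eq_of_lintegral_eq m0n mvn hle2 hN0fin (by rw [← hN0, ← hNv, eNv])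
    have keyR : ∀ᵐ z ∂(volume.restrict Ω), B (v z) * μf z = B (u₀ z) * μf z := by
      filter_upwards [key1, key2] with z h1 h2
      exact real_eq_of_ofReal h1 h2.symm
    intro y hy
    by_contra hcon
    push_neg at hcon
    set T : Set (Euc n) := Ω ∩ (fun z => u₀ z - ℓ z) ⁻¹' (Set.Iio 0) with hT
    have hTopen : IsOpen T :=
      (hu₀cont.sub hℓcont.continuousOn).isOpen_inter_preimage hΩopen isOpen_Iio
    have hTsub : T ⊆ Ω := Set.inter_subset_left
    have hyT : y ∈ T := by
      refine ⟨hy, ?_⟩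
      simp only [Set.mem_preimage, Set.mem_Iio, hℓdef]
      linarith
    have hzero' : volume.restrict Ω {x | x ∈ Ω ∧ μf x = 0} = 0 :=
      le_antisymm (le_trans (Measure.le_iff'.1 Measure.restrict_le_self _) hzero.le) (zero_le)
    have hbadsub : T ⊆ {z | ¬ (B (v z) * μf z = B (u₀ z) * μf z)} ∪ {x | x ∈ Ω ∧ μf x = 0} := by
      rintro z ⟨hzΩ, hzlt⟩
      simp only [Set.mem_preimage, Set.mem_Iio, sub_neg] at hzlt
      by_cases hμ0 : μf z = 0
      · exact Or.inr ⟨hzΩ, hμ0⟩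
      · refine Or.inl (fun heq => ?_)
        have hBeq : B (v z) = B (u₀ z) := mul_right_cancel₀ hμ0 heq
        have hvz : u₀ z < v z := lt_of_lt_of_le hzlt (le_max_right _ _)
        exact absurd hBeq (ne_of_gt (hBmono hvz))
    have hT0 : volume.restrict Ω T = 0 :=
      measure_mono_null hbadsub (measure_union_null (ae_iff.1 keyR) hzero')
    have hvol : volume T = 0 := by
      rw [Measure.restrict_apply hTopen.measurableSet] at hT0
      rwa [Set.inter_eq_left.2 hTsub] at hT0
    have : T = ∅ := hTopen.eq_empty_of_measure_zero hvol
    rw [this] at hyT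
    exact hyT
  intro x hx
  obtain ⟨p, c, hle, heqx⟩ := exists_supporting hΩopen hΩconv hu₀conv hx
  constructor
  · rintro t ⟨p', c', hpc', rfl⟩
    exact hub p' c' hpc' x hx
  · intro t ht
    refine ht ⟨p, c, fun z hz => hle z ?_, heqx.symm⟩
    rcases hz with h | h
    · exact subset_closure h.1
    · exact frontier_subset_closure h
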